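/- arXiv:1912.01253 — 4 statements merged into one kernel-verified Lean document; each statement's English description precedes it below -/
import Mathlib

section
/- Let a ∈ ℝ^n with a ≠ 0 and let H = {x ∈ ℝ^n : Σ_{k=1}^n a_k x_k ≥ 0} be the corresponding closed linear halfspace. Then either tconv(H) = H or tconv(H) = ℝ^n. -/
/-- A set `U ⊆ ℝ^n` is tropically convex (min-plus convention). -/
def TropConvex {n : ℕ} (U : Set (Fin n → ℝ)) : Prop :=
  ∀ x ∈ U, ∀ y ∈ U, ∀ a b : ℝ, min a b = 0 →
    (fun i => min (a + x i) (b + y i)) ∈ U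

/-- The tropical convex hull: the intersection of all tropically convex sets containing `U`. -/
def tconv {n : ℕ} (U : Set (Fin n → ℝ)) : Set (Fin n → ℝ) :=
  ⋂₀ {V | TropConvex V ∧ U ⊆ V}

lemma tconv_self {n : ℕ} {H : Set (Fin n → ℝ)} (h : TropConvex H) : tconv H = H := by
  apply subset_antisymm
  · exact Set.sInter_subset_of_mem ⟨h, subset_rfl⟩
  · intro x hx
    exact Set.mem_sInter.mpr fun V hV => hV.2 hx

/-- all coefficients nonpositive : one-sided estimate -/
lemma key0 {n : ℕ} {a : Fin n → ℝ} (hneg : ∀ k, a k ≤ 0)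
    {x : Fin n → ℝ} (hx : 0 ≤ ∑ k, a k * x k) (β : ℝ) (y : Fin n → ℝ) :
    0 ≤ ∑ k, a k * min (x k) (β + y k) := by
  refine hx.trans (Finset.sum_le_sum fun k _ => ?_)
  exact mul_le_mul_of_nonpos_left (min_le_left _ _) (hneg k)

/-- one positive coefficient and nonnegative total : one-sided estimate -/
lemma key1 {n : ℕ} {a : Fin n → ℝ} {j : Fin n} (hj : 0 < a j)
    (hneg : ∀ k, k ≠ j → a k ≤ 0) (hsum : 0 ≤ ∑ k, a k)
    {x y : Fin n → ℝ} (hx : 0 ≤ ∑ k, a k * x k) (hy : 0 ≤ ∑ k, a k * y k)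
    {β : ℝ} (hβ : 0 ≤ β) :
    0 ≤ ∑ k, a k * min (x k) (β + y k) := by
  rcases le_or_gt (x j) (β + y j) with h | h
  · refine hx.trans (Finset.sum_le_sum fun k _ => ?_)
    by_cases hk : k = j
    · subst hk; rw [min_eq_left h]
    · exact mul_le_mul_of_nonpos_left (min_le_left _ _) (hneg k hk)
  · have step : ∑ k, a k * (β + y k) ≤ ∑ k, a k * min (x k) (β + y k) := by
      refine Finset.sum_le_sum fun k _ => ?_
      by_cases hk : k = j
      · subst hk; rw [min_eq_right h.le]
      · exact mul_le_mul_of_nonpos_left (min_le_right _ _) (hneg k hk)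
    refine le_trans ?_ step
    have : ∑ k, a k * (β + y k) = β * (∑ k, a k) + ∑ k, a k * y k := by
      rw [Finset.mul_sum, ← Finset.sum_add_distrib]
      congr 1; ext k; ring
    rw [this]
    positivity

theorem tconv_halfspace (n : ℕ) (a : Fin n → ℝ) (ha : a ≠ 0)
    (H : Set (Fin n → ℝ)) (hH : H = {x | 0 ≤ ∑ k, a k * x k}) :
    tconv H = H ∨ tconv H = Set.univ := by
  by_cases hpos : ∃ j, 0 < a j
  · obtain ⟨j, hj⟩ := hpos
    by_cases h2 : ∃ l, l ≠ j ∧ 0 < a l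
    · -- two positive coordinates: hull is everything
      obtain ⟨l, hlj, hl⟩ := h2
      right
      refine subset_antisymm (Set.subset_univ _) ?_
      intro z _
      refine Set.mem_sInter.mpr fun V hV => ?_
      set S := ∑ k, a k * z k with hS
      set x : Fin n → ℝ := fun k => z k + if k = j then |S| / a j else 0 with hxdef
      set y : Fin n → ℝ := fun k => z k + if k = l then |S| / a l else 0 with hydef
      have hsum : ∀ (m : Fin n) (c : ℝ),
          ∑ k, a k * (z k + if k = m then c else 0) = S + a m * c := by
        intro m c
        have : ∀ k, a k * (z k + if k = m then c else 0)
            = a k * z k + (if k = m then a k * c else 0) := by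
          intro k; by_cases hk : k = m <;> simp [hk] <;> ring
        simp only [this, Finset.sum_add_distrib, Finset.sum_ite_eq', Finset.mem_univ, if_true, hS]
      have hx : x ∈ H := by
        rw [hH]
        show 0 ≤ ∑ k, a k * x k
        rw [hxdef, hsum j, mul_div_cancel₀ _ hj.ne']
        have := neg_abs_le S; linarith
      have hy : y ∈ H := by
        rw [hH]
        show 0 ≤ ∑ k, a k * y k
        rw [hydef, hsum l, mul_div_cancel₀ _ hl.ne']
        have := neg_abs_le S; linarith
      have hmem := hV.1 x (hV.2 hx) y (hV.2 hy) 0 0 (by norm_num)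
      have hTj : 0 ≤ |S| / a j := div_nonneg (abs_nonneg _) hj.le
      have hTl : 0 ≤ |S| / a l := div_nonneg (abs_nonneg _) hl.le
      have hz : z = fun i => min (0 + x i) (0 + y i) := by
        funext k
        simp only [hxdef, hydef, zero_add]
        by_cases hkj : k = j
        · subst hkj
          rw [if_pos rfl, if_neg (fun h => hlj (h ▸ rfl) : ¬ k = l), add_zero,
            min_eq_right (by linarith)]
        · rw [if_neg hkj, add_zero]
          by_cases hkl : k = l
          · subst hkl
            rw [if_pos rfl, min_eq_left (by linarith)]
          · rw [if_neg hkl, add_zero, min_self]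
      rw [hz]
      exact hmem
    · push_neg at h2
      rcases le_or_gt 0 (∑ k, a k) with hsum | hsum
      · -- convex case
        left
        apply tconv_self
        intro x hx y hy α β hmin
        rw [hH] at hx hy ⊢
        have hα : 0 ≤ α := by
          have := min_le_left α β; rw [hmin] at this
          have h2 := le_min_iff.mp (le_of_eq hmin.symm); exact h2.1
        have hβ : 0 ≤ β := by
          have h2 := le_min_iff.mp (le_of_eq hmin.symm); exact h2.2
        rcases min_eq_iff.mp hmin with ⟨h0, _⟩ | ⟨h0, _⟩
        · subst h0
          show 0 ≤ ∑ k, a k * min (0 + x k) (β + y k)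
          simp only [zero_add]
          exact key1 hj (fun k hk => h2 k (by simpa using hk)) hsum hx hy hβ
        · subst h0
          show 0 ≤ ∑ k, a k * min (α + x k) (0 + y k)
          simp only [zero_add]
          have : ∀ k, min (α + x k) (y k) = min (y k) (α + x k) := fun k => min_comm _ _
          simp only [this]
          exact key1 hj (fun k hk => h2 k (by simpa using hk)) hsum hy hx hα
      · -- one positive, negative total sum: hull is everything
        right
        refine subset_antisymm (Set.subset_univ _) ?_
        intro z _
        refine Set.mem_sInter.mpr fun V hV => ?_
        set S := ∑ k, a k * z k with hS
        set c := ∑ k, a k with hc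
        set T := |S| / a j with hT
        set b := |S| / (-c) with hb
        have hb0 : 0 ≤ b := div_nonneg (abs_nonneg _) (by linarith)
        have hT0 : 0 ≤ T := div_nonneg (abs_nonneg _) hj.le
        set x : Fin n → ℝ := fun k => z k + if k = j then T else 0 with hxdef
        set y : Fin n → ℝ := fun k => z k - b with hydef
        have hx : x ∈ H := by
          rw [hH]
          show 0 ≤ ∑ k, a k * x k
          have : ∀ k, a k * (z k + if k = j then T else 0)
              = a k * z k + (if k = j then a k * T else 0) := by
            intro k; by_cases hk : k = j <;> simp [hk] <;> ring
          simp only [hxdef, this, Finset.sum_add_distrib, Finset.sum_ite_eq',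
            Finset.mem_univ, if_true]
          rw [hT, mul_div_cancel₀ _ hj.ne']
          have := neg_abs_le S; rw [← hS]; linarith
        have hy : y ∈ H := by
          rw [hH]
          show 0 ≤ ∑ k, a k * y k
          have : ∀ k, a k * (z k - b) = a k * z k - b * a k := by intro k; ring
          simp only [hydef, this, Finset.sum_sub_distrib, ← Finset.mul_sum, ← hS, ← hc]
          have hc0 : c ≠ 0 := ne_of_lt hsum
          have hbc : b * c = -|S| := by
            rw [hb, div_neg, neg_mul, div_mul_cancel₀ _ hc0]
          nlinarith [abs_nonneg S, neg_abs_le S]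
        have hmem := hV.1 x (hV.2 hx) y (hV.2 hy) 0 b (by simp [min_eq_left hb0])
        have hz : z = fun i => min (0 + x i) (b + y i) := by
          funext k
          simp only [hxdef, hydef, zero_add]
          by_cases hkj : k = j
          · subst hkj
            rw [if_pos rfl, min_eq_right (by linarith)]
            ring
          · rw [if_neg hkj, add_zero, min_eq_left (by linarith)]
        rw [hz]
        exact hmem
  · -- all coefficients nonpositive: convex
    push_neg at hpos
    left
    apply tconv_self
    intro x hx y hy α β hmin
    rw [hH] at hx hy ⊢
    rcases min_eq_iff.mp hmin with ⟨h0, _⟩ | ⟨h0, _⟩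
    · subst h0
      show 0 ≤ ∑ k, a k * min (0 + x k) (β + y k)
      simp only [zero_add]
      exact key0 hpos hx β y
    · subst h0
      show 0 ≤ ∑ k, a k * min (α + x k) (0 + y k)
      simp only [zero_add]
      have : ∀ k, min (α + x k) (y k) = min (y k) (α + x k) := fun k => min_comm _ _
      simp only [this]
      exact key0 hpos hy α x
end

section
/- Let a ∈ ℝ^n with a ≠ 0 and let H = {x ∈ ℝ^n : Σ_{k=1}^n a_k x_k ≥ 0}. Then the following are equivalent: (1) H is tropically convex; (2) there exists j ∈ {0, 1, …, n} with S_j ⊆ H; (3) either a_k ≤ 0 for all k ∈ {1, …, n}, or there exists j ∈ {1, …, n} such that a_k ≤ 0 for all k ≠ j and Σ_{k=1}^n a_k ≥ 0. -/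
/-- The sectors `S_0, S_1, …, S_n` of `ℝ^n`, indexed by `j : Fin (n+1)`. -/
def sector {n : ℕ} (j : Fin (n + 1)) : Set (Fin n → ℝ) :=
  if _h : (j : ℕ) = 0 then {x | ∀ i, x i ≤ 0}
  else {x | 0 ≤ x ⟨(j : ℕ) - 1, by have := j.isLt; omega⟩ ∧
            ∀ i, x i ≤ x ⟨(j : ℕ) - 1, by have := j.isLt; omega⟩}

lemma sector_zero {n : ℕ} : (sector (0 : Fin (n+1))) = {x | ∀ i, x i ≤ 0} := by
  simp [sector]

lemma sector_succ {n : ℕ} (j : Fin n) :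
    sector j.succ = {x : Fin n → ℝ | 0 ≤ x j ∧ ∀ i, x i ≤ x j} := by
  have h : ((j.succ : Fin (n+1)) : ℕ) ≠ 0 := by simp
  have hidx : (⟨((j.succ : Fin (n+1)) : ℕ) - 1, by have := j.succ.isLt; omega⟩ : Fin n) = j := by
    apply Fin.ext; simp
  simp only [sector, dif_neg h, hidx]

lemma sum_single {n : ℕ} (a : Fin n → ℝ) (p : Fin n) (f : Fin n → ℝ)
    (hf : ∀ k, k ≠ p → f k = 0) : ∑ k, a k * f k = a p * f p := by
  apply Finset.sum_eq_single_of_mem p (Finset.mem_univ p)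
  intro k _ hk
  rw [hf k hk, mul_zero]

lemma sum_pair' {n : ℕ} (a : Fin n → ℝ) (p q : Fin n) (hpq : p ≠ q) (f : Fin n → ℝ)
    (hf : ∀ k, k ≠ p → k ≠ q → f k = 0) :
    ∑ k, a k * f k = a p * f p + a q * f q := by
  have h1 : ∑ k ∈ ({p, q} : Finset (Fin n)), a k * f k = ∑ k, a k * f k := by
    apply Finset.sum_subset (Finset.subset_univ _)
    intro k _ hk
    simp only [Finset.mem_insert, Finset.mem_singleton, not_or] at hk
    rw [hf k hk.1 hk.2, mul_zero]
  rw [← h1, Finset.sum_pair hpq]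

lemma three_to_one {n : ℕ} (a : Fin n → ℝ)
    (h3 : (∀ k, a k ≤ 0) ∨ ∃ j : Fin n, (∀ k, k ≠ j → a k ≤ 0) ∧ 0 ≤ ∑ k, a k) :
    TropConvex {x : Fin n → ℝ | 0 ≤ ∑ k, a k * x k} := by
  intro x hx y hy s t hst
  simp only [Set.mem_setOf_eq] at hx hy ⊢
  have hs : 0 ≤ s := by have := min_le_left s t; rw [hst] at this; exact this
  have ht : 0 ≤ t := by have := min_le_right s t; rw [hst] at this; exact this
  rcases h3 with h | ⟨j, hj, hsum⟩
  · rcases min_eq_iff.mp hst with ⟨hs0, _⟩ | ⟨ht0, _⟩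
    · calc (0:ℝ) ≤ ∑ k, a k * x k := hx
        _ = ∑ k, a k * (s + x k) := by simp [hs0]
        _ ≤ ∑ k, a k * min (s + x k) (t + y k) :=
            Finset.sum_le_sum fun k _ =>
              mul_le_mul_of_nonpos_left (min_le_left _ _) (h k)
    · calc (0:ℝ) ≤ ∑ k, a k * y k := hy
        _ = ∑ k, a k * (t + y k) := by simp [ht0]
        _ ≤ ∑ k, a k * min (s + x k) (t + y k) :=
            Finset.sum_le_sum fun k _ =>
              mul_le_mul_of_nonpos_left (min_le_right _ _) (h k)
  · rcases le_total (s + x j) (t + y j) with h1 | h1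
    · calc (0:ℝ) ≤ s * (∑ k, a k) + ∑ k, a k * x k :=
            add_nonneg (mul_nonneg hs hsum) hx
        _ = ∑ k, a k * (s + x k) := by
            rw [Finset.mul_sum, ← Finset.sum_add_distrib]
            exact Finset.sum_congr rfl fun k _ => by ring
        _ ≤ ∑ k, a k * min (s + x k) (t + y k) := by
            refine Finset.sum_le_sum fun k _ => ?_
            by_cases hk : k = j
            · subst hk; rw [min_eq_left h1]
            · exact mul_le_mul_of_nonpos_left (min_le_left _ _) (hj k hk)
    · calc (0:ℝ) ≤ t * (∑ k, a k) + ∑ k, a k * y k :=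
            add_nonneg (mul_nonneg ht hsum) hy
        _ = ∑ k, a k * (t + y k) := by
            rw [Finset.mul_sum, ← Finset.sum_add_distrib]
            exact Finset.sum_congr rfl fun k _ => by ring
        _ ≤ ∑ k, a k * min (s + x k) (t + y k) := by
            refine Finset.sum_le_sum fun k _ => ?_
            by_cases hk : k = j
            · subst hk; rw [min_eq_right h1]
            · exact mul_le_mul_of_nonpos_left (min_le_right _ _) (hj k hk)

lemma one_to_three {n : ℕ} (a : Fin n → ℝ)
    (h1 : TropConvex {x : Fin n → ℝ | 0 ≤ ∑ k, a k * x k}) :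
    (∀ k, a k ≤ 0) ∨ ∃ j : Fin n, (∀ k, k ≠ j → a k ≤ 0) ∧ 0 ≤ ∑ k, a k := by
  by_contra hc
  push_neg at hc
  obtain ⟨⟨p, hp⟩, hc2⟩ := hc
  by_cases hq : ∃ q, q ≠ p ∧ 0 < a q
  · -- two strictly positive coordinates
    obtain ⟨q, hqp, hq⟩ := hq
    set x : Fin n → ℝ := fun k => if k = p then a q / a p else if k = q then -1 else 0 with hxdef
    set y : Fin n → ℝ := fun k => if k = q then a p / a q else if k = p then -1 else 0 with hydef
    have hxp : x p = a q / a p := by simp [hxdef]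
    have hxq : x q = -1 := by simp [hxdef, hqp, hqp.symm]
    have hyq : y q = a p / a q := by simp [hydef]
    have hyp : y p = -1 := by simp [hydef, hqp, hqp.symm]
    have hx : x ∈ {x : Fin n → ℝ | 0 ≤ ∑ k, a k * x k} := by
      have : ∑ k, a k * x k = a p * x p + a q * x q := by
        apply sum_pair' a p q (Ne.symm hqp)
        intro k hk1 hk2; simp [hxdef, hk1, hk2]
      rw [Set.mem_setOf_eq, this, hxp, hxq, mul_comm (a p), div_mul_cancel₀ _ (ne_of_gt hp)]
      ring_nf
      linarith
    have hy : y ∈ {x : Fin n → ℝ | 0 ≤ ∑ k, a k * x k} := by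
      have : ∑ k, a k * y k = a p * y p + a q * y q := by
        apply sum_pair' a p q (Ne.symm hqp)
        intro k hk1 hk2; simp [hydef, hk1, hk2]
      rw [Set.mem_setOf_eq, this, hyp, hyq, mul_comm (a q), div_mul_cancel₀ _ (ne_of_gt hq)]
      ring_nf
      linarith
    have hmem := h1 x hx y hy 0 0 (min_self 0)
    simp only [Set.mem_setOf_eq, zero_add] at hmem
    have hz : ∑ k, a k * min (x k) (y k) = a p * min (x p) (y p) + a q * min (x q) (y q) := by
      apply sum_pair' a p q (Ne.symm hqp)
      intro k hk1 hk2
      simp [hxdef, hydef, hk1, hk2]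
    have hminp : min (x p) (y p) = -1 := by
      rw [hxp, hyp]
      apply min_eq_right
      have : 0 ≤ a q / a p := div_nonneg hq.le hp.le
      linarith
    have hminq : min (x q) (y q) = -1 := by
      rw [hxq, hyq]
      apply min_eq_left
      have : 0 ≤ a p / a q := div_nonneg hp.le hq.le
      linarith
    rw [hz, hminp, hminq] at hmem
    nlinarith
  · -- a p is the only positive coordinate; the total sum is negative
    push_neg at hq
    have hnp : ∀ k, k ≠ p → a k ≤ 0 := hq
    have hsneg : ∑ k, a k < 0 := hc2 p hnp
    set T : ℝ := (-(∑ k, a k)) / a p with hTdef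
    have hT : 0 ≤ T := by
      apply div_nonneg (by linarith) (le_of_lt hp)
    set x : Fin n → ℝ := fun k => if k = p then 1 + T else 1 with hxdef
    have hx : x ∈ {x : Fin n → ℝ | 0 ≤ ∑ k, a k * x k} := by
      have hterm : ∀ k, a k * x k = a k + (if k = p then a p * T else 0) := by
        intro k
        by_cases h : k = p <;> simp [hxdef, h] <;> ring
      have : ∑ k, a k * x k = (∑ k, a k) + a p * T := by
        rw [Finset.sum_congr rfl fun k _ => hterm k, Finset.sum_add_distrib,
          Finset.sum_ite_eq' Finset.univ p fun _ => a p * T]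
        simp
      rw [Set.mem_setOf_eq, this, hTdef, mul_comm, div_mul_cancel₀ _ (ne_of_gt hp)]
      linarith
    have hy : (fun _ : Fin n => (0:ℝ)) ∈ {x : Fin n → ℝ | 0 ≤ ∑ k, a k * x k} := by
      simp
    have hmem := h1 x hx _ hy 0 1 (by norm_num)
    simp only [Set.mem_setOf_eq, zero_add] at hmem
    have hone : ∀ k, min (x k) (1 + (0:ℝ)) = 1 := by
      intro k
      by_cases h : k = p <;> simp [hxdef, h]
      linarith
    rw [Finset.sum_congr rfl fun k _ => by rw [hone k]] at hmem
    simp only [mul_one] at hmem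
    linarith

lemma three_to_two {n : ℕ} (a : Fin n → ℝ)
    (h3 : (∀ k, a k ≤ 0) ∨ ∃ j : Fin n, (∀ k, k ≠ j → a k ≤ 0) ∧ 0 ≤ ∑ k, a k) :
    ∃ j : Fin (n + 1), sector j ⊆ {x : Fin n → ℝ | 0 ≤ ∑ k, a k * x k} := by
  rcases h3 with h | ⟨j, hj, hsum⟩
  · refine ⟨0, ?_⟩
    intro x hx
    rw [sector_zero] at hx
    show (0:ℝ) ≤ ∑ k, a k * x k
    exact Finset.sum_nonneg fun k _ => by nlinarith [h k, hx k]
  · refine ⟨j.succ, ?_⟩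
    intro x hx
    rw [sector_succ] at hx
    obtain ⟨hxj, hxle⟩ := hx
    calc (0:ℝ) ≤ (∑ k, a k) * x j := mul_nonneg hsum hxj
      _ = ∑ k, a k * x j := by rw [Finset.sum_mul]
      _ ≤ ∑ k, a k * x k := by
          refine Finset.sum_le_sum fun k _ => ?_
          by_cases hk : k = j
          · subst hk; exact le_refl _
          · exact mul_le_mul_of_nonpos_left (hxle k) (hj k hk)

lemma two_to_three {n : ℕ} (a : Fin n → ℝ)
    (h2 : ∃ j : Fin (n + 1), sector j ⊆ {x : Fin n → ℝ | 0 ≤ ∑ k, a k * x k}) :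
    (∀ k, a k ≤ 0) ∨ ∃ j : Fin n, (∀ k, k ≠ j → a k ≤ 0) ∧ 0 ≤ ∑ k, a k := by
  obtain ⟨j, hj⟩ := h2
  by_cases hj0 : (j : ℕ) = 0
  · left
    have hj' : j = 0 := Fin.ext hj0
    subst hj'
    rw [sector_zero] at hj
    intro k
    have hmem : (fun i => if i = k then (-1:ℝ) else 0) ∈ {x : Fin n → ℝ | ∀ i, x i ≤ 0} := by
      intro i
      by_cases h : i = k <;> simp [h]
    have := hj hmem
    rw [Set.mem_setOf_eq, sum_single a k _ (fun i hi => by simp [hi])] at this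
    simp at this
    linarith
  · right
    have hlt : (j : ℕ) - 1 < n := by have := j.isLt; omega
    set j' : Fin n := ⟨(j : ℕ) - 1, hlt⟩ with hj'def
    have hjs : j = j'.succ := by
      apply Fin.ext
      simp [hj'def]
      omega
    rw [hjs, sector_succ] at hj
    refine ⟨j', ?_, ?_⟩
    · intro k hk
      have hmem : (fun i => if i = k then (-1:ℝ) else 0) ∈
          {x : Fin n → ℝ | 0 ≤ x j' ∧ ∀ i, x i ≤ x j'} := by
        refine ⟨?_, fun i => ?_⟩
        · simp [Ne.symm hk]
        · by_cases h : i = k <;> simp [h, Ne.symm hk]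
      have := hj hmem
      rw [Set.mem_setOf_eq, sum_single a k _ (fun i hi => by simp [hi])] at this
      simp at this
      linarith
    · have hmem : (fun _ : Fin n => (1:ℝ)) ∈
          {x : Fin n → ℝ | 0 ≤ x j' ∧ ∀ i, x i ≤ x j'} := by
        exact ⟨by norm_num, fun i => le_refl _⟩
      have := hj hmem
      rw [Set.mem_setOf_eq] at this
      simpa using this

theorem tropically_convex_halfspace_iff (n : ℕ) (a : Fin n → ℝ) (ha : a ≠ 0)
    (H : Set (Fin n → ℝ)) (hH : H = {x | 0 ≤ ∑ k, a k * x k}) :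
    (TropConvex H ↔ ∃ j : Fin (n + 1), sector j ⊆ H) ∧
    ((∃ j : Fin (n + 1), sector j ⊆ H) ↔
      ((∀ k, a k ≤ 0) ∨ ∃ j : Fin n, (∀ k, k ≠ j → a k ≤ 0) ∧ 0 ≤ ∑ k, a k)) := by
  subst hH
  refine ⟨⟨fun h => three_to_two a (one_to_three a h),
          fun h => three_to_one a (two_to_three a h)⟩,
        ⟨fun h => two_to_three a h, fun h => three_to_two a h⟩⟩
end

section
/- A linear subspace L of ℝ^n is tropically convex if and only if there exist a set A of pairs (i, j) of indices with i ≠ j and a set B of indices k such that L = {x ∈ ℝ^n : x_i = x_j for all (i, j) ∈ A, and x_k = 0 for all k ∈ B} (the empty intersection being all of ℝ^n). -/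
namespace TropAux

variable {n : ℕ}

/-- 0/1 indicator function of a finset. -/
noncomputable def indFn (T : Finset (Fin n)) : Fin n → ℝ := fun j => if j ∈ T then 1 else 0

open Classical in
/-- All indicator sets in `L` containing `i`. -/
noncomputable def Fi (L : Submodule ℝ (Fin n → ℝ)) (i : Fin n) : Finset (Finset (Fin n)) :=
  Finset.univ.filter (fun T => i ∈ T ∧ indFn T ∈ L)

/-- The minimal indicator set containing `i`. -/
noncomputable def Ei (L : Submodule ℝ (Fin n → ℝ)) (i : Fin n) : Finset (Fin n) :=
  (Fi L i).inf id

variable {L : Submodule ℝ (Fin n → ℝ)}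

lemma mem_Fi {i : Fin n} {T : Finset (Fin n)} : T ∈ Fi L i ↔ i ∈ T ∧ indFn T ∈ L := by
  classical
  simp [Fi]

lemma Ei_subset {i : Fin n} {T : Finset (Fin n)} (hT : T ∈ Fi L i) : Ei L i ⊆ T :=
  Finset.inf_le (f := id) hT

lemma mem_Ei_of {i j : Fin n} (h : ∀ T ∈ Fi L i, j ∈ T) : j ∈ Ei L i := by
  have : ({j} : Finset (Fin n)) ≤ (Fi L i).inf id :=
    Finset.le_inf (fun T hT => Finset.singleton_subset_iff.mpr (h T hT))
  exact Finset.singleton_subset_iff.mp this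

lemma min_mem (hL : TropConvex (L : Set (Fin n → ℝ))) {x y : Fin n → ℝ}
    (hx : x ∈ L) (hy : y ∈ L) : (fun i => min (x i) (y i)) ∈ L := by
  have := hL x hx y hy 0 0 (by simp)
  simpa using this

lemma indFn_inter_mem (hL : TropConvex (L : Set (Fin n → ℝ))) {T T' : Finset (Fin n)}
    (h : indFn T ∈ L) (h' : indFn T' ∈ L) : indFn (T ∩ T') ∈ L := by
  classical
  have hm := min_mem hL h h'
  have he : (fun i => min (indFn T i) (indFn T' i)) = indFn (T ∩ T') := by
    funext j
    by_cases h1 : j ∈ T <;> by_cases h2 : j ∈ T' <;> simp [indFn, h1, h2]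
  rwa [he] at hm

lemma inf_ind_mem (hL : TropConvex (L : Set (Fin n → ℝ))) (G : Finset (Finset (Fin n)))
    (hG : ∀ T ∈ G, indFn T ∈ L) (T0 : Finset (Fin n)) (hT0 : indFn T0 ∈ L) :
    indFn (G.inf id ∩ T0) ∈ L := by
  classical
  induction G using Finset.induction_on generalizing T0 with
  | empty => simpa [Finset.inf_empty] using hT0
  | @insert a s hnotmem ih =>
      rw [Finset.inf_insert]
      have h1 : indFn (id a ∩ T0) ∈ L :=
        indFn_inter_mem hL (hG a (Finset.mem_insert_self a s)) hT0
      have h2 := ih (fun T hT => hG T (Finset.mem_insert_of_mem hT)) (id a ∩ T0) h1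
      have he : (id a ⊓ s.inf id) ∩ T0 = s.inf id ∩ (id a ∩ T0) := by
        ext x
        simp only [Finset.inf_eq_inter, Finset.mem_inter, id]
        tauto
      rw [he]
      exact h2

lemma Ei_ind_mem (hL : TropConvex (L : Set (Fin n → ℝ))) {i : Fin n}
    (hne : (Fi L i).Nonempty) : indFn (Ei L i) ∈ L ∧ i ∈ Ei L i := by
  classical
  obtain ⟨T0, hT0⟩ := hne
  constructor
  · have h := inf_ind_mem hL (Fi L i) (fun T hT => (mem_Fi.mp hT).2) T0 (mem_Fi.mp hT0).2
    have he : (Fi L i).inf id ∩ T0 = (Fi L i).inf id :=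
      Finset.inter_eq_left.mpr (Ei_subset hT0)
    rwa [he] at h
  · exact mem_Ei_of (fun T hT => (mem_Fi.mp hT).1)


lemma trunc_mem (hL : TropConvex (L : Set (Fin n → ℝ))) {x : Fin n → ℝ}
    (hx : x ∈ L) {a : ℝ} (ha : 0 ≤ a) : (fun i => min (x i + a) 0) ∈ L := by
  have h := hL x hx 0 L.zero_mem a 0 (min_eq_right ha)
  have he : (fun i => min (a + x i) (0 + (0 : Fin n → ℝ) i)) = (fun i => min (x i + a) 0) := by
    funext i; simp [add_comm]
  rwa [he] at h

lemma ind_lt_mem (hL : TropConvex (L : Set (Fin n → ℝ))) {x : Fin n → ℝ}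
    (hx : x ∈ L) {t : ℝ} (ht : t < 0) :
    (fun i => if x i < t then (1:ℝ) else 0) ∈ L := by
  classical
  by_cases hS : ∃ i, x i < t
  · obtain ⟨i0, hi0⟩ := hS
    set S : Finset (Fin n) := Finset.univ.filter (fun i => x i < t) with hSdef
    have hSne : (S.image (fun i => t - x i)).Nonempty :=
      ⟨t - x i0, Finset.mem_image.mpr ⟨i0, by simp [hSdef, hi0], rfl⟩⟩
    set ε := (S.image (fun i => t - x i)).min' hSne with hεdef
    have hεpos : 0 < ε := by
      obtain ⟨i, hi, hival⟩ := Finset.mem_image.mp ((S.image (fun i => t - x i)).min'_mem hSne)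
      have hxi : x i < t := by simpa [hSdef] using hi
      rw [hεdef]
      rw [← hival] at *
      linarith
    have hεle : ∀ i, x i < t → x i ≤ t - ε := by
      intro i hi
      have : ε ≤ t - x i := Finset.min'_le _ _ (Finset.mem_image.mpr ⟨i, by simp [hSdef, hi], rfl⟩)
      linarith
    have h1 := trunc_mem hL hx (a := -t) (by linarith)
    have h2 := trunc_mem hL hx (a := -t + ε) (by linarith)
    have h3 : (fun i => if x i < t then (1:ℝ) else 0) =
        (-ε)⁻¹ • ((fun i => min (x i + -t) 0) - (fun i => min (x i + (-t + ε)) 0)) := by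
      funext i
      simp only [Pi.smul_apply, Pi.sub_apply, smul_eq_mul]
      by_cases h : x i < t
      · have hle : x i ≤ t - ε := hεle i h
        rw [min_eq_left (by linarith), min_eq_left (by linarith), if_pos h]
        field_simp
        ring
      · push_neg at h
        rw [min_eq_right (by linarith), min_eq_right (by linarith), if_neg (not_lt.mpr h)]
        ring
    rw [h3]
    exact L.smul_mem _ (L.sub_mem h1 h2)
  · push_neg at hS
    have : (fun i => if x i < t then (1:ℝ) else 0) = 0 := by
      funext i; simp [not_lt.mpr (hS i)]
    rw [this]; exact L.zero_mem

lemma ind_gt_mem (hL : TropConvex (L : Set (Fin n → ℝ))) {x : Fin n → ℝ}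
    (hx : x ∈ L) {t : ℝ} (ht : 0 < t) :
    (fun i => if t < x i then (1:ℝ) else 0) ∈ L := by
  have h := ind_lt_mem hL (L.neg_mem hx) (t := -t) (by linarith)
  have he : (fun i => if (-x) i < -t then (1:ℝ) else 0) = (fun i => if t < x i then (1:ℝ) else 0) := by
    funext i
    simp [neg_lt_neg_iff, Pi.neg_apply]
  rwa [he] at h


lemma ite01 (p : Prop) [Decidable p] :
    (if p then (1:ℝ) else 0) = 0 ∨ (if p then (1:ℝ) else 0) = 1 := by
  by_cases h : p <;> simp [h]

/-- An indicator-valued element of L gives a member of `Fi`. -/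
lemma Fi_of_fun {i : Fin n} {u : Fin n → ℝ} (hu : u ∈ L) (hvals : ∀ k, u k = 0 ∨ u k = 1)
    (hi : u i = 1) : ∃ T ∈ Fi L i, ∀ k, (k ∈ T ↔ u k = 1) := by
  classical
  refine ⟨Finset.univ.filter (fun k => u k = 1), ?_, ?_⟩
  · rw [mem_Fi]
    constructor
    · simp [hi]
    · have : indFn (Finset.univ.filter (fun k => u k = 1)) = u := by
        funext k
        rcases hvals k with h | h <;> simp [indFn, h]
      rwa [this]
  · intro k; simp

/-- Fi is nonempty for a coordinate where some element of L is nonzero. -/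
lemma Fi_nonempty (hL : TropConvex (L : Set (Fin n → ℝ))) {x : Fin n → ℝ} (hx : x ∈ L)
    {i : Fin n} (hi : x i ≠ 0) : (Fi L i).Nonempty := by
  rcases lt_or_gt_of_ne hi with h | h
  · obtain ⟨T, hT, _⟩ := Fi_of_fun (i := i) (ind_lt_mem hL hx (t := x i / 2) (by linarith))
      (fun k => ite01 _) (by rw [if_pos (by linarith)])
    exact ⟨T, hT⟩
  · obtain ⟨T, hT, _⟩ := Fi_of_fun (i := i) (ind_gt_mem hL hx (t := x i / 2) (by linarith))
      (fun k => ite01 _) (by rw [if_pos (by linarith)])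
    exact ⟨T, hT⟩

/-- Separation: if `x i < 0` and `x j ≠ x i`, there is an indicator set in L containing i, not j. -/
lemma sep_neg (hL : TropConvex (L : Set (Fin n → ℝ))) {x : Fin n → ℝ} (hx : x ∈ L)
    {i j : Fin n} (hi : x i < 0) (hij : x j ≠ x i) : ∃ T ∈ Fi L i, j ∉ T := by
  classical
  rcases lt_or_gt_of_ne hij with hlt | hgt
  · -- x j < x i : shift low coordinates up and cut below x i
    set t0 := (x j + x i) / 2 with ht0def
    have ht0 : t0 < 0 := by rw [ht0def]; linarith
    have hu0 := ind_lt_mem hL hx ht0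
    set u0 : Fin n → ℝ := fun k => if x k < t0 then (1:ℝ) else 0 with hu0def
    have hw : x + (-(x j)) • u0 ∈ L := L.add_mem hx (L.smul_mem _ hu0)
    set w := x + (-(x j)) • u0 with hwdef
    have hwi : w i = x i := by
      rw [hwdef]; simp only [Pi.add_apply, Pi.smul_apply, smul_eq_mul, hu0def]
      rw [if_neg (by rw [ht0def]; push_neg; linarith)]; ring
    have hwj : w j = 0 := by
      rw [hwdef]; simp only [Pi.add_apply, Pi.smul_apply, smul_eq_mul, hu0def]
      rw [if_pos (by rw [ht0def]; linarith)]; ring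
    have hv := ind_lt_mem hL hw (t := x i / 2) (by linarith)
    obtain ⟨T, hT, hTk⟩ := Fi_of_fun (i := i) hv
      (fun k => ite01 _)
      (by rw [if_pos (show w i < x i / 2 by rw [hwi]; linarith)])
    refine ⟨T, hT, ?_⟩
    rw [hTk j, if_neg (show ¬ w j < x i / 2 by rw [hwj]; push_neg; linarith)]
    norm_num
  · -- x i < x j : cut strictly between
    set t := (x i + min (x j) 0) / 2 with htdef
    have hm1 : min (x j) 0 ≤ x j := min_le_left _ _
    have hm2 : min (x j) 0 ≤ 0 := min_le_right _ _
    have hm3 : x i < min (x j) 0 := lt_min hgt hi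
    have ht : t < 0 := by rw [htdef]; linarith
    obtain ⟨T, hT, hTk⟩ := Fi_of_fun (i := i) (ind_lt_mem hL hx ht)
      (fun k => ite01 _)
      (by rw [if_pos (show x i < t by rw [htdef]; linarith)])
    refine ⟨T, hT, ?_⟩
    rw [hTk j, if_neg (show ¬ x j < t by rw [htdef]; push_neg; linarith)]
    norm_num

/-- Key property: everything in `Ei L i` is equal to coordinate i on all of L. -/
lemma Ei_eq_coord (hL : TropConvex (L : Set (Fin n → ℝ))) {i j : Fin n}
    (hne : (Fi L i).Nonempty) (hj : j ∈ Ei L i) {x : Fin n → ℝ} (hx : x ∈ L) :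
    x j = x i := by
  classical
  by_contra hij
  rcases lt_trichotomy (x i) 0 with hi0 | hi0 | hi0
  · obtain ⟨T, hT, hjT⟩ := sep_neg hL hx hi0 hij
    exact hjT (Ei_subset hT hj)
  · -- x i = 0, x j ≠ 0
    have hxj : x j ≠ 0 := by rw [hi0] at hij; exact hij
    obtain ⟨hEmem, hiE⟩ := Ei_ind_mem hL hne
    have hw : indFn (Ei L i) - (x j)⁻¹ • x ∈ L := L.sub_mem hEmem (L.smul_mem _ hx)
    set w := indFn (Ei L i) - (x j)⁻¹ • x with hwdef
    have hwi : w i = 1 := by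
      rw [hwdef]; simp only [Pi.sub_apply, Pi.smul_apply, smul_eq_mul, indFn]
      rw [if_pos hiE, hi0]; ring
    have hwj : w j = 0 := by
      rw [hwdef]; simp only [Pi.sub_apply, Pi.smul_apply, smul_eq_mul, indFn]
      rw [if_pos hj, inv_mul_cancel₀ hxj]; ring
    have hv := ind_gt_mem hL hw (t := (1:ℝ)/2) (by norm_num)
    obtain ⟨T, hT, hTk⟩ := Fi_of_fun (i := i) hv
      (fun k => ite01 _)
      (by rw [if_pos (show (1:ℝ)/2 < w i by rw [hwi]; norm_num)])
    have hjmem : j ∈ T := Ei_subset hT hj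
    rw [hTk j, if_neg (show ¬ (1:ℝ)/2 < w j by rw [hwj]; norm_num)] at hjmem
    exact absurd hjmem (by norm_num)
  · have hi0' : (-x) i < 0 := by simp; linarith
    have hij' : (-x) j ≠ (-x) i := by simp; intro h; exact hij (by linarith)
    obtain ⟨T, hT, hjT⟩ := sep_neg hL (L.neg_mem hx) hi0' hij'
    exact hjT (Ei_subset hT hj)

/-- Converse: a coordinate identically equal to i on L lies in `Ei L i`. -/
lemma mem_Ei_of_coord {i j : Fin n} (h : ∀ x ∈ L, x j = x i) : j ∈ Ei L i := by
  apply mem_Ei_of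
  intro T hT
  obtain ⟨hiT, hTL⟩ := mem_Fi.mp hT
  have := h (indFn T) hTL
  by_contra hjT
  simp only [indFn, if_pos hiT, if_neg hjT] at this
  norm_num at this

end TropAux

open TropAux in
theorem tropically_convex_linear_subspace_iff (n : ℕ) (L : Submodule ℝ (Fin n → ℝ)) :
    TropConvex (L : Set (Fin n → ℝ)) ↔
      ∃ (A : Set (Fin n × Fin n)) (B : Set (Fin n)),
        (∀ p ∈ A, p.1 ≠ p.2) ∧
        (L : Set (Fin n → ℝ)) =
          {x | (∀ p ∈ A, x p.1 = x p.2) ∧ ∀ k ∈ B, x k = 0} := by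
  classical
  constructor
  · intro hL
    refine ⟨{p | p.1 ≠ p.2 ∧ ∀ x ∈ L, x p.1 = x p.2}, {k | ∀ x ∈ L, x k = 0},
      fun p hp => hp.1, ?_⟩
    ext y
    simp only [SetLike.mem_coe, Set.mem_setOf_eq]
    constructor
    · intro hy
      exact ⟨fun p hp => hp.2 y hy, fun k hk => hk y hy⟩
    · rintro ⟨hA, hB⟩
      set NZ : Finset (Fin n) := Finset.univ.filter (fun i => ¬ ∀ x ∈ L, x i = 0) with hNZdef
      have hNZ : ∀ i, i ∈ NZ ↔ ¬ ∀ x ∈ L, x i = 0 := by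
        intro i; simp [hNZdef]
      have hFi : ∀ i ∈ NZ, (Fi L i).Nonempty := by
        intro i hi
        rw [hNZ] at hi
        push_neg at hi
        obtain ⟨x, hx, hxi⟩ := hi
        exact Fi_nonempty hL hx hxi
      set z : Fin n → ℝ := ∑ i ∈ NZ, (y i / ((Ei L i).card : ℝ)) • indFn (Ei L i) with hzdef
      have hz : z ∈ L :=
        Submodule.sum_mem _ (fun i hi => L.smul_mem _ (Ei_ind_mem hL (hFi i hi)).1)
      have hyz : y = z := by
        funext k
        have hzk : z k = ∑ i ∈ NZ, (y i / ((Ei L i).card : ℝ)) * indFn (Ei L i) k := by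
          rw [hzdef, Finset.sum_apply]
          simp [Pi.smul_apply]
        by_cases hk : ∀ x ∈ L, x k = 0
        · have : ∀ i ∈ NZ, (y i / ((Ei L i).card : ℝ)) * indFn (Ei L i) k = 0 := by
            intro i hi
            have hkE : k ∉ Ei L i := by
              intro hkE
              apply (hNZ i).mp hi
              intro x hx
              have := Ei_eq_coord hL (hFi i hi) hkE hx
              rw [← this]; exact hk x hx
            rw [indFn, if_neg hkE, mul_zero]
          rw [hzk, Finset.sum_congr rfl this, Finset.sum_const, smul_zero, hB k hk]
        · have hkNZ : k ∈ NZ := (hNZ k).mpr hk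
          have hFik := hFi k hkNZ
          have hterm : ∀ i ∈ NZ, (y i / ((Ei L i).card : ℝ)) * indFn (Ei L i) k =
              if i ∈ Ei L k then y k / ((Ei L k).card : ℝ) else 0 := by
            intro i hi
            by_cases hik : k ∈ Ei L i
            · have hco : ∀ x ∈ L, x k = x i := fun x hx => Ei_eq_coord hL (hFi i hi) hik hx
              have hiEk : i ∈ Ei L k := mem_Ei_of_coord (fun x hx => (hco x hx).symm)
              have hyik : y i = y k := by
                by_cases hik' : i = k
                · rw [hik']
                · exact hA (i, k) ⟨hik', fun x hx => (hco x hx).symm⟩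
              have hEE : Ei L i = Ei L k := by
                ext j
                constructor
                · intro hj
                  exact mem_Ei_of_coord (fun x hx =>
                    (Ei_eq_coord hL (hFi i hi) hj hx).trans (hco x hx).symm)
                · intro hj
                  exact mem_Ei_of_coord (fun x hx =>
                    (Ei_eq_coord hL hFik hj hx).trans (hco x hx))
              rw [indFn, if_pos hik, mul_one, if_pos hiEk, hyik, hEE]
            · have hiEk : i ∉ Ei L k := by
                intro hiEk
                exact hik (mem_Ei_of_coord (fun x hx =>
                  (Ei_eq_coord hL hFik hiEk hx).symm))
              rw [indFn, if_neg hik, mul_zero, if_neg hiEk]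
          have hsub : Ei L k ⊆ NZ := by
            intro j hj
            rw [hNZ]
            intro hj0
            apply hk
            intro x hx
            rw [← Ei_eq_coord hL hFik hj hx]
            exact hj0 x hx
          have hcard : ((Ei L k).card : ℝ) ≠ 0 := by
            have : k ∈ Ei L k := (Ei_ind_mem hL hFik).2
            simp only [ne_eq, Nat.cast_eq_zero, Finset.card_eq_zero]
            intro h
            rw [h] at this
            exact absurd this (Finset.notMem_empty k)
          rw [hzk, Finset.sum_congr rfl hterm, Finset.sum_ite_mem,
            Finset.inter_eq_right.mpr hsub, Finset.sum_const, nsmul_eq_mul,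
            mul_div_cancel₀ _ hcard]
      rw [hyz]; exact hz
  · rintro ⟨A, B, hA, hLeq⟩
    intro x hx y hy a b hab
    rw [hLeq] at hx hy ⊢
    obtain ⟨hxA, hxB⟩ := hx
    obtain ⟨hyA, hyB⟩ := hy
    refine ⟨fun p hp => ?_, fun k hk => ?_⟩
    · simp only
      rw [hxA p hp, hyA p hp]
    · simp only
      rw [hxB k hk, hyB k hk, add_zero, add_zero, hab]
end

section
/- Let I be a finite index set, and for each i ∈ I let a^i ∈ ℝ^n with a^i ≠ 0 and c_i ∈ ℝ, defining the closed halfspace H_i = {x ∈ ℝ^n : Σ_{k=1}^n a^i_k x_k ≥ c_i}. Let P = ⋂_{i ∈ I} H_i. Assume P is full-dimensional (its topological interior is nonempty) and the representation is irredundant: for every i ∈ I, ⋂_{j ∈ I, j ≠ i} H_j ≠ P. Then P is tropically convex if and only if every H_i is tropically convex. -/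
lemma dot_comb {n : ℕ} (v pp xx qq : Fin n → ℝ) (s : ℝ) :
    ∑ k, v k * (pp k + s * (xx k - qq k))
      = ∑ k, v k * pp k + s * (∑ k, v k * xx k - ∑ k, v k * qq k) := by
  have h1 : ∑ k, v k * (pp k + s * (xx k - qq k))
      = ∑ k, (v k * pp k + (s * (v k * xx k) - s * (v k * qq k))) :=
    Finset.sum_congr rfl fun k _ => by ring
  rw [h1, Finset.sum_add_distrib, Finset.sum_sub_distrib, ← Finset.mul_sum, ← Finset.mul_sum,
    mul_sub]

lemma min_scale (C s u v : ℝ) (hs : 0 ≤ s) : min (C + s*u) (C + s*v) = C + s * min u v := by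
  rcases le_total u v with h | h
  · rw [min_eq_left h, min_eq_left (by nlinarith)]
  · rw [min_eq_right h, min_eq_right (by nlinarith)]

lemma interior_halfspace_strict {n : ℕ} (v : Fin n → ℝ) (hv : v ≠ 0) (c : ℝ) (u : Fin n → ℝ)
    (hu : u ∈ interior {x : Fin n → ℝ | c ≤ ∑ k, v k * x k}) : c < ∑ k, v k * u k := by
  rw [mem_interior_iff_mem_nhds, Metric.mem_nhds_iff] at hu
  obtain ⟨ε, hε, hball⟩ := hu
  have hvn : 0 < ‖v‖ := norm_pos_iff.mpr hv
  have hS : 0 < ∑ k, v k * v k := by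
    obtain ⟨k0, hk0⟩ : ∃ k, v k ≠ 0 := by
      by_contra h; push_neg at h; exact hv (funext h)
    exact Finset.sum_pos' (fun k _ => mul_self_nonneg _)
      ⟨k0, Finset.mem_univ _, mul_self_pos.mpr hk0⟩
  set δ := ε / (2 * ‖v‖) with hδ
  have hδpos : 0 < δ := by positivity
  have hd : δ * ‖v‖ = ε / 2 := by rw [hδ]; field_simp
  have hmem : u - δ • v ∈ {x : Fin n → ℝ | c ≤ ∑ k, v k * x k} := by
    apply hball
    rw [Metric.mem_ball, dist_eq_norm]
    have he : u - δ • v - u = (-δ) • v := by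
      ext k; simp only [Pi.sub_apply, Pi.smul_apply, smul_eq_mul, neg_mul]; ring
    rw [he, norm_smul]
    simp only [norm_neg, Real.norm_eq_abs, abs_of_pos hδpos]
    linarith
  have hcomp : ∑ k, v k * (u - δ • v) k = ∑ k, v k * u k - δ * ∑ k, v k * v k := by
    have h1 : ∀ k, v k * (u - δ • v) k = v k * u k - δ * (v k * v k) := by
      intro k
      simp only [Pi.sub_apply, Pi.smul_apply, smul_eq_mul]; ring
    rw [Finset.sum_congr rfl fun k _ => h1 k, Finset.sum_sub_distrib, ← Finset.mul_sum]
  have hm := hmem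
  simp only [Set.mem_setOf_eq, hcomp] at hm
  nlinarith [mul_pos hδpos hS]

theorem tropically_convex_polyhedron_iff (n : ℕ) (I : Type) [Fintype I]
    (a : I → Fin n → ℝ) (ha : ∀ i, a i ≠ 0) (c : I → ℝ)
    (H : I → Set (Fin n → ℝ))
    (hH : ∀ i, H i = {x | c i ≤ ∑ k, a i k * x k})
    (P : Set (Fin n → ℝ)) (hP : P = ⋂ i, H i)
    (hfull : (interior P).Nonempty)
    (hirr : ∀ i : I, (⋂ j : I, ⋂ _ : j ≠ i, H j) ≠ P) :
    TropConvex P ↔ ∀ i, TropConvex (H i) := by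
  constructor
  · -- hard direction
    intro hPconv i
    by_contra hHi
    unfold TropConvex at hHi
    push_neg at hHi
    obtain ⟨x, hx, y, hy, lam, mu, hmin, hz⟩ := hHi
    set z : Fin n → ℝ := fun k => min (lam + x k) (mu + y k) with hzdef
    have hxH : c i ≤ ∑ k, a i k * x k := by rw [hH i] at hx; exact hx
    have hyH : c i ≤ ∑ k, a i k * y k := by rw [hH i] at hy; exact hy
    have hzH : ∑ k, a i k * z k < c i := by
      rw [hH i] at hz; exact lt_of_not_ge hz
    -- interior point u
    obtain ⟨u, hu⟩ := hfull
    have huH : ∀ j, c j < ∑ k, a j k * u k := by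
      intro j
      have hsub : P ⊆ H j := by rw [hP]; exact Set.iInter_subset H j
      exact interior_halfspace_strict (a j) (ha j) (c j) u
        ((hH j) ▸ interior_mono hsub hu)
    -- point w violating only the i-th constraint
    have hPsub : P ⊆ ⋂ j, ⋂ _ : j ≠ i, H j := by
      rw [hP]; intro w hw
      simp only [Set.mem_iInter] at hw ⊢
      exact fun j _ => hw j
    obtain ⟨w, hwQ, hwP⟩ :=
      Set.exists_of_ssubset (lt_of_le_of_ne hPsub (Ne.symm (hirr i)))
    simp only [Set.mem_iInter] at hwQ
    have hwj : ∀ j, j ≠ i → c j ≤ ∑ k, a j k * w k := by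
      intro j hj
      have := hwQ j hj
      rw [hH j] at this; exact this
    have hwi : ∑ k, a i k * w k < c i := by
      by_contra hge
      push_neg at hge
      apply hwP
      rw [hP, Set.mem_iInter]
      intro j
      by_cases hj : j = i
      · subst hj; rw [hH]; exact hge
      · exact hwQ j hj
    -- facet point p
    set fu := ∑ k, a i k * u k with hfudef
    set fw := ∑ k, a i k * w k with hfwdef
    have hfu : c i < fu := huH i
    have hden : 0 < fu - fw := by linarith
    set t := (fu - c i) / (fu - fw) with htdef
    have ht0 : 0 < t := div_pos (by linarith) hden
    have ht1 : t < 1 := by rw [htdef, div_lt_one hden]; linarith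
    set p : Fin n → ℝ := fun k => u k + t * (w k - u k) with hpdef
    have hpcomp : ∀ j, ∑ k, a j k * p k
        = ∑ k, a j k * u k + t * (∑ k, a j k * w k - ∑ k, a j k * u k) := by
      intro j; rw [hpdef]; exact dot_comb (a j) u w u t
    have htmul : t * (fu - fw) = fu - c i := by
      rw [htdef]; exact div_mul_cancel₀ _ (ne_of_gt hden)
    have hpi : ∑ k, a i k * p k = c i := by
      rw [hpcomp i, ← hfudef, ← hfwdef]
      nlinarith [htmul]
    have hpj : ∀ j, j ≠ i → c j < ∑ k, a j k * p k := by
      intro j hj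
      rw [hpcomp j]
      nlinarith [huH j, hwj j hj]
    -- reference boundary point q of H i
    set S := ∑ k, a i k * a i k with hSdef
    have hSpos : 0 < S := by
      obtain ⟨k0, hk0⟩ : ∃ k, a i k ≠ 0 := by
        by_contra h; push_neg at h; exact ha i (funext h)
      exact Finset.sum_pos' (fun k _ => mul_self_nonneg _)
        ⟨k0, Finset.mem_univ _, mul_self_pos.mpr hk0⟩
    set q : Fin n → ℝ := fun k => (c i / S) * a i k with hqdef
    have hqi : ∑ k, a i k * q k = c i := by
      have h1 : ∀ k, a i k * q k = (c i / S) * (a i k * a i k) := by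
        intro k; rw [hqdef]; ring
      rw [Finset.sum_congr rfl fun k _ => h1 k, ← Finset.mul_sum, ← hSdef,
        div_mul_cancel₀ _ (ne_of_gt hSpos)]
    -- open neighbourhood of p inside all other halfspaces
    set V := {v : Fin n → ℝ | ∀ j, j ≠ i → c j < ∑ k, a j k * v k} with hVdef
    have hcont : ∀ j, Continuous fun v : Fin n → ℝ => ∑ k, a j k * v k :=
      fun j => continuous_finset_sum _ fun k _ => continuous_const.mul (continuous_apply k)
    have hVopen : IsOpen V := by
      have hVeq : V = ⋂ j, ⋂ _ : j ≠ i, {v : Fin n → ℝ | c j < ∑ k, a j k * v k} := by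
        ext v; simp [hVdef, Set.mem_iInter]
      rw [hVeq]
      exact isOpen_iInter_of_finite fun j => isOpen_iInter_of_finite fun hj =>
        isOpen_lt continuous_const (hcont j)
    have hpV : p ∈ V := hpj
    obtain ⟨ε, hε, hball⟩ := Metric.isOpen_iff.mp hVopen p hpV
    -- scaling factor s
    set D := 1 + ‖x - q‖ + ‖y - q‖ + ‖z - q‖ with hDdef
    have hD : 0 < D := by positivity
    set s := ε / (2 * D) with hsdef
    have hs : 0 < s := by positivity
    have hsD : s * D = ε / 2 := by rw [hsdef]; field_simp
    have hballmem : ∀ vv : Fin n → ℝ, ‖vv - q‖ ≤ D →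
        (fun k => p k + s * (vv k - q k)) ∈ Metric.ball p ε := by
      intro vv hvv
      rw [Metric.mem_ball, dist_eq_norm]
      have he : (fun k => p k + s * (vv k - q k)) - p = s • (vv - q) := by
        ext k; simp only [Pi.sub_apply, Pi.smul_apply, smul_eq_mul]; ring
      rw [he, norm_smul, Real.norm_eq_abs, abs_of_pos hs]
      have h1 : s * ‖vv - q‖ ≤ s * D := mul_le_mul_of_nonneg_left hvv hs.le
      have h2 : s * ‖vv - q‖ ≤ ε / 2 := h1.trans_eq hsD
      linarith
    set x' : Fin n → ℝ := fun k => p k + s * (x k - q k) with hx'def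
    set y' : Fin n → ℝ := fun k => p k + s * (y k - q k) with hy'def
    set z' : Fin n → ℝ := fun k => p k + s * (z k - q k) with hz'def
    have hnx : ‖x - q‖ ≤ D := by
      rw [hDdef]; linarith [norm_nonneg (y - q), norm_nonneg (z - q)]
    have hny : ‖y - q‖ ≤ D := by
      rw [hDdef]; linarith [norm_nonneg (x - q), norm_nonneg (z - q)]
    have memP : ∀ vv : Fin n → ℝ, ‖vv - q‖ ≤ D → c i ≤ ∑ k, a i k * vv k →
        (fun k => p k + s * (vv k - q k)) ∈ P := by
      intro vv hvv hvvH
      rw [hP, Set.mem_iInter]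
      intro j
      by_cases hj : j = i
      · subst hj
        rw [hH]
        show c j ≤ ∑ k, a j k * (p k + s * (vv k - q k))
        rw [dot_comb, hpi, hqi]
        nlinarith
      · rw [hH j]
        have hmemV : (fun k => p k + s * (vv k - q k)) ∈ V := hball (hballmem vv hvv)
        exact le_of_lt (hmemV j hj)
    have hx'P : x' ∈ P := by rw [hx'def]; exact memP x hnx hxH
    have hy'P : y' ∈ P := by rw [hy'def]; exact memP y hny hyH
    have hmin' : min (s * lam) (s * mu) = 0 := by
      have h0 := min_scale 0 s lam mu hs.le
      simp only [zero_add] at h0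
      rw [h0, hmin, mul_zero]
    have hqmem := hPconv x' hx'P y' hy'P (s * lam) (s * mu) hmin'
    have hfun : (fun k => min (s * lam + x' k) (s * mu + y' k)) = z' := by
      funext k
      have e1 : s * lam + x' k = (p k - s * q k) + s * (lam + x k) := by
        rw [hx'def]; ring
      have e2 : s * mu + y' k = (p k - s * q k) + s * (mu + y k) := by
        rw [hy'def]; ring
      rw [e1, e2, min_scale _ _ _ _ hs.le, hz'def, hzdef]
      ring
    rw [hfun] at hqmem
    have hz'H : c i ≤ ∑ k, a i k * z' k := by
      have := Set.mem_iInter.mp (hP ▸ hqmem) i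
      rw [hH i] at this; exact this
    rw [hz'def, dot_comb, hpi, hqi] at hz'H
    nlinarith
  · -- easy direction
    intro h
    intro x hx y hy lam mu hmin
    rw [hP, Set.mem_iInter] at hx hy ⊢
    exact fun i => h i x (hx i) y (hy i) lam mu hmin
end
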